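/- Let (G, G⁺, u) be a partially ordered abelian group with order unit u, let ⪰ be a translation-invariant total order on G, and let τ be a faithful state of (G, G⁺, u). Define P = {a ∈ G : τ(a) > 0} ∪ {a ∈ G : τ(a) = 0 and a ⪰ 0}. Then P + P ⊆ P, P ∩ (−P) = {0}, P ∪ (−P) = G, G⁺ ⊆ P and u is an order unit of (G, P). In particular (G, P, u) is a totally ordered abelian group with order unit, and the identity map of G is positive from (G, G⁺) to (G, P). -/
import Mathlib


/-- refining the order of a partially ordered abelian group with order
unit via a faithful state τ and a translation-invariant total order gives a totally
ordered abelian group with the same order unit, containing the original cone. -/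
theorem stmt_8 {G : Type*} [AddCommGroup G]
    (Gpos : Set G)
    (hzero : (0 : G) ∈ Gpos)
    (hadd : ∀ a ∈ Gpos, ∀ b ∈ Gpos, a + b ∈ Gpos)
    (hpointed : ∀ a : G, a ∈ Gpos → -a ∈ Gpos → a = 0)
    (u : G) (hu : u ∈ Gpos)
    (hunit : ∀ x : G, ∃ n : ℕ, n • u - x ∈ Gpos)
    (le : G → G → Prop) (hlin : IsLinearOrder G le)
    (hinv : ∀ x y z : G, le x y → le (x + z) (y + z))
    (τ : G →+ ℝ) (hτu : τ u = 1)
    (hτpos : ∀ a ∈ Gpos, 0 ≤ τ a)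
    (hτfaithful : ∀ a ∈ Gpos, a ≠ 0 → 0 < τ a)
    (P : Set G)
    (hP : P = {a : G | 0 < τ a ∨ (τ a = 0 ∧ le 0 a)}) :
    (∀ a ∈ P, ∀ b ∈ P, a + b ∈ P) ∧
    (∀ a : G, a ∈ P → -a ∈ P → a = 0) ∧
    (∀ a : G, a ∈ P ∨ -a ∈ P) ∧
    Gpos ⊆ P ∧
    (u ∈ P ∧ ∀ x : G, ∃ n : ℕ, n • u - x ∈ P) := by
  subst hP
  have hGsub : Gpos ⊆ {a : G | 0 < τ a ∨ (τ a = 0 ∧ le 0 a)} := by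
    intro a ha
    by_cases h : a = 0
    · subst h
      exact Or.inr ⟨map_zero τ, hlin.refl 0⟩
    · exact Or.inl (hτfaithful a ha h)
  refine ⟨?_, ?_, ?_, hGsub, hGsub hu, fun x => ?_⟩
  · rintro a (ha | ⟨ha0, hale⟩) b (hb | ⟨hb0, hble⟩)
    · exact Or.inl (by simpa using add_pos ha hb)
    · exact Or.inl (by simp only [map_add, hb0, add_zero]; exact ha)
    · exact Or.inl (by simp only [map_add, ha0, zero_add]; exact hb)
    · refine Or.inr ⟨by simp [ha0, hb0], ?_⟩
      have h1 : le b (a + b) := by simpa using hinv 0 a b hale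
      have h2 : le 0 b := hble
      exact hlin.trans _ _ _ h2 h1
  · rintro a (ha | ⟨ha0, hale⟩) (hb | ⟨hb0, hble⟩)
    · simp only [map_neg] at hb; linarith
    · simp only [map_neg] at hb0; linarith
    · simp only [map_neg] at hb; linarith
    · have h1 : le a 0 := by simpa using hinv 0 (-a) a hble
      exact hlin.antisymm _ _ h1 hale
  · intro a
    rcases lt_trichotomy (τ a) 0 with h | h | h
    · exact Or.inr (Or.inl (by simpa using neg_pos.mpr h))
    · rcases hlin.total 0 a with hle | hle
      · exact Or.inl (Or.inr ⟨h, hle⟩)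
      · refine Or.inr (Or.inr ⟨by simp [h], ?_⟩)
        simpa using hinv a 0 (-a) hle
    · exact Or.inl (Or.inl h)
  · obtain ⟨n, hn⟩ := hunit x
    exact ⟨n, hGsub hn⟩
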